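/- Let α > -1, n ≥ 2, and H = A_n²(𝔻, μ_α). Then the Berezin transform Ber_H : B(H) → L^∞(𝔻), defined by Ber_H(S)(z) = ⟨S K_z, K_z⟩ / ⟨K_z, K_z⟩ where K_z is the reproducing kernel of H at z, is not injective: there exists a nonzero bounded operator S on H with Ber_H(S) = 0. -/

import Mathlib

open MeasureTheory Finset
open scoped InnerProductSpace

/-- The open unit disk in the complex plane. -/
def unitDisk : Set ℂ := {z : ℂ | ‖z‖ < 1}

/-- The normalized weighted Lebesgue measure on the unit disk. -/
noncomputable def muAlpha (α : ℝ) : Measure ℂ :=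
  ((volume : Measure ℂ).restrict unitDisk).withDensity
    fun z => ENNReal.ofReal ((α + 1) / Real.pi * (1 - ‖z‖ ^ 2) ^ α)

/-- f is n-analytic on U. -/
def PolyAnalyticOn (n : ℕ) (f : ℂ → ℂ) (U : Set ℂ) : Prop :=
  ∃ g : ℕ → ℂ → ℂ, (∀ k < n, DifferentiableOn ℂ (g k) U) ∧
    ∀ z ∈ U, f z = ∑ k ∈ Finset.range n, g k z * (starRingEnd ℂ z) ^ k

/-- The weighted Bergman space of n-analytic functions on the unit disk,
as a closed subspace of L²(𝔻, μ_α). -/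
noncomputable def bergmanSubmodule (α : ℝ) (n : ℕ) : Submodule ℂ (Lp ℂ 2 (muAlpha α)) :=
  (Submodule.span ℂ
    {g : Lp ℂ 2 (muAlpha α) | ∃ (f : ℂ → ℂ) (_ : PolyAnalyticOn n f unitDisk)
      (hm : MemLp f 2 (muAlpha α)), g = hm.toLp f}).topologicalClosure


section Aux
open Real Set
open scoped ENNReal


lemma one_add_rpow_le (α : ℝ) {r : ℝ} (hr0 : 0 ≤ r) (hr1 : r ≤ 1) :
    (1 + r) ^ α ≤ 2 ^ |α| := by
  rcases le_or_gt 0 α with h | h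
  · calc (1+r)^α ≤ 2^α := Real.rpow_le_rpow (by linarith) (by linarith) h
      _ ≤ 2^ |α| := Real.rpow_le_rpow_of_exponent_le one_le_two (le_abs_self α)
  · calc (1+r)^α ≤ 1 := Real.rpow_le_one_of_one_le_of_nonpos (by linarith) h.le
      _ ≤ 2^ |α| := Real.one_le_rpow one_le_two (abs_nonneg α)

lemma lintegral_disk_lt_top (α : ℝ) (hα : -1 < α) :
    ∫⁻ q : ℝ × ℝ in {q | q.1^2 + q.2^2 < 1},
      ENNReal.ofReal ((1 - (q.1^2+q.2^2)) ^ α) ∂volume < ⊤ := by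
  set s : Set (ℝ × ℝ) := Ioo (0:ℝ) 1 ×ˢ Ioo (-π) π with hs_def
  have hs : MeasurableSet s := measurableSet_Ioo.prod measurableSet_Ioo
  have hst : s ⊆ polarCoord.target := by
    rintro ⟨r, θ⟩ ⟨h1, h2⟩
    exact ⟨Ioo_subset_Ioi_self h1, h2⟩
  set B : ℝ × ℝ → ℝ × ℝ →L[ℝ] ℝ × ℝ := fun p =>
    LinearMap.toContinuousLinearMap (Matrix.toLin (Module.Basis.finTwoProd ℝ) (Module.Basis.finTwoProd ℝ)
      !![cos p.2, -p.1 * sin p.2; sin p.2, p.1 * cos p.2]) with hB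
  have B_det : ∀ p, (B p).det = p.1 := by
    intro p
    conv_rhs => rw [← one_mul p.1, ← cos_sq_add_sin_sq p.2]
    simp only [B, neg_mul, LinearMap.det_toContinuousLinearMap, LinearMap.det_toLin,
      Matrix.det_fin_two_of, sub_neg_eq_add]
    ring
  have A : ∀ p ∈ s, HasFDerivWithinAt polarCoord.symm (B p) s p := fun p _ =>
    (hasFDerivAt_polarCoord_symm p).hasFDerivWithinAt
  have hinj : InjOn polarCoord.symm s := polarCoord.symm.injOn.mono hst
  have hsumsq : ∀ p : ℝ × ℝ,
      (polarCoord.symm p).1 ^ 2 + (polarCoord.symm p).2 ^ 2 = p.1 ^ 2 := by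
    intro p
    simp only [polarCoord_symm_apply]
    nlinarith [sin_sq_add_cos_sq p.2]
  have himg : polarCoord.symm '' s = polarCoord.source ∩ {q : ℝ × ℝ | q.1^2 + q.2^2 < 1} := by
    ext q
    constructor
    · rintro ⟨p, hp, rfl⟩
      refine ⟨polarCoord.map_target (hst hp), ?_⟩
      have := hsumsq p
      simp only [mem_setOf_eq, this]
      exact pow_lt_one₀ (le_of_lt hp.1.1) hp.1.2 two_ne_zero
    · rintro ⟨hq_src, hq_lt⟩
      refine ⟨polarCoord q, ?_, polarCoord.left_inv hq_src⟩
      have hsum_pos : 0 < q.1^2 + q.2^2 := by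
        rcases hq_src with h | h
        · have : 0 < q.1 ^ 2 := pow_pos h 2
          nlinarith [sq_nonneg q.2]
        · have h0 : q.2 ≠ 0 := h
          have h2 : 0 < q.2 ^ 2 := by positivity
          nlinarith [sq_nonneg q.1]
      constructor
      · constructor
        · exact Real.sqrt_pos.mpr hsum_pos
        · rw [show (polarCoord q).1 = Real.sqrt (q.1^2+q.2^2) from rfl]
          rw [Real.sqrt_lt' one_pos]
          simpa using hq_lt
      · refine ⟨Complex.neg_pi_lt_arg _, ?_⟩
        rw [show (polarCoord q).2 = Complex.arg (Complex.equivRealProd.symm q) from rfl,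
          Complex.arg_lt_pi_iff]
        rcases hq_src with h | h
        · exact Or.inl (le_of_lt h)
        · exact Or.inr h
  have hcongr : ((polarCoord.source ∩ {q : ℝ × ℝ | q.1^2 + q.2^2 < 1} : Set (ℝ × ℝ))) =ᵐ[volume]
      ({q : ℝ × ℝ | q.1^2 + q.2^2 < 1} : Set (ℝ × ℝ)) := by
    have h1 := polarCoord_source_ae_eq_univ
    simpa [Set.univ_inter] using
      MeasureTheory.ae_eq_set_inter h1
        (Filter.EventuallyEq.refl _ ({q : ℝ × ℝ | q.1^2 + q.2^2 < 1} : Set (ℝ × ℝ)))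
  rw [setLIntegral_congr hcongr.symm, ← himg,
    lintegral_image_eq_lintegral_abs_det_fderiv_mul volume hs A hinj]
  have hbound : ∀ p ∈ s,
      ENNReal.ofReal |(B p).det| *
        ENNReal.ofReal ((1 - ((polarCoord.symm p).1^2 + (polarCoord.symm p).2^2)) ^ α)
      ≤ ENNReal.ofReal ((2:ℝ)^ |α| * (1 - p.1) ^ α) := by
    rintro ⟨r, θ⟩ hp
    have hr0 : 0 < r := hp.1.1
    have hr1 : r < 1 := hp.1.2
    rw [B_det, hsumsq]
    have h1 : |r| ≤ 1 := by rw [abs_of_pos hr0]; exact hr1.le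
    have h2 : (1 - r^2 : ℝ) ^ α ≤ (2:ℝ)^ |α| * (1 - r) ^ α := by
      have : (1 - r^2 : ℝ) = (1 - r) * (1 + r) := by ring
      rw [this, Real.mul_rpow (by linarith) (by linarith), mul_comm]
      exact mul_le_mul_of_nonneg_right (one_add_rpow_le α hr0.le hr1.le)
        (Real.rpow_nonneg (by linarith) α)
    calc ENNReal.ofReal |r| * ENNReal.ofReal ((1 - r^2) ^ α)
        ≤ 1 * ENNReal.ofReal ((1 - r^2) ^ α) := by
          gcongr
          exact_mod_cast ENNReal.ofReal_le_one.mpr h1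
      _ = ENNReal.ofReal ((1 - r^2) ^ α) := one_mul _
      _ ≤ ENNReal.ofReal ((2:ℝ)^ |α| * (1 - r) ^ α) := ENNReal.ofReal_le_ofReal h2
  refine lt_of_le_of_lt (setLIntegral_mono ?_ hbound) ?_
  · fun_prop
  · rw [hs_def, Measure.volume_eq_prod, ← Measure.prod_restrict]
    have hmf : AEMeasurable (fun x : ℝ => ENNReal.ofReal ((2:ℝ) ^ |α| * (1 - x) ^ α))
        (volume.restrict (Ioo (0:ℝ) 1)) := by fun_prop
    have hprod : ∫⁻ p : ℝ × ℝ, ENNReal.ofReal ((2:ℝ) ^ |α| * (1 - p.1) ^ α)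
          ∂((volume.restrict (Ioo (0:ℝ) 1)).prod (volume.restrict (Ioo (-π) π)))
        = (∫⁻ x in Ioo (0:ℝ) 1, ENNReal.ofReal ((2:ℝ) ^ |α| * (1 - x) ^ α)) *
          (∫⁻ _ in Ioo (-π) π, (1:ℝ≥0∞)) := by
      rw [← lintegral_prod_mul hmf aemeasurable_const]
      exact lintegral_congr fun p => (mul_one _).symm
    rw [hprod]
    have h1 : ∫⁻ x in Ioo (0:ℝ) 1, ENNReal.ofReal ((2:ℝ) ^ |α| * (1 - x) ^ α) < ⊤ := by
      have hint : IntervalIntegrable (fun x : ℝ => (2:ℝ) ^ |α| * (1-x)^α) volume 0 1 := by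
        have := (intervalIntegral.intervalIntegrable_rpow' (a := 0) (b := 1) hα).comp_sub_left 1
        simpa using (this.const_mul ((2:ℝ) ^ |α|)).symm
      have hIoc : IntegrableOn (fun x : ℝ => (2:ℝ) ^ |α| * (1-x)^α) (Ioc 0 1) volume :=
        (intervalIntegrable_iff_integrableOn_Ioc_of_le (by norm_num)).mp hint
      have hIoo : IntegrableOn (fun x : ℝ => (2:ℝ) ^ |α| * (1-x)^α) (Ioo 0 1) volume :=
        hIoc.mono_set Ioo_subset_Ioc_self
      have hpos : 0 ≤ᵐ[volume.restrict (Ioo (0:ℝ) 1)] fun x : ℝ => (2:ℝ) ^ |α| * (1-x)^α := by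
        filter_upwards [ae_restrict_mem measurableSet_Ioo] with x hx
        have h1x : (0:ℝ) ≤ 1 - x := by linarith [hx.2]
        positivity
      exact (hasFiniteIntegral_iff_ofReal hpos).mp hIoo.2
    have h2 : ∫⁻ _ in Ioo (-π) π, (1:ℝ≥0∞) < ⊤ := by
      simp [lintegral_one]
    exact ENNReal.mul_lt_top h1 h2

lemma isOpen_unitDisk : IsOpen unitDisk :=
  isOpen_lt continuous_norm continuous_const

lemma isFiniteMeasure_muAlpha (α : ℝ) (hα : -1 < α) : IsFiniteMeasure (muAlpha α) := by
  constructor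
  rw [muAlpha, withDensity_apply _ MeasurableSet.univ, Measure.restrict_univ]
  have hmeas : Measurable fun a : ℂ =>
      ENNReal.ofReal ((α + 1) / Real.pi * (1 - ‖a‖ ^ 2) ^ α) := by
    have h1 : Measurable fun a : ℂ => (1 - ‖a‖ ^ 2 : ℝ) :=
      (measurable_const.sub (continuous_norm.measurable.pow_const 2))
    have h2 : Measurable fun x : ℝ => x ^ α := by fun_prop
    exact ENNReal.measurable_ofReal.comp (measurable_const.mul (h2.comp h1))
  have hmap : Measure.map Complex.measurableEquivRealProd.symm volume = volume :=
    (Complex.volume_preserving_equiv_real_prod.symm _).map_eq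
  rw [show ((volume : Measure ℂ).restrict unitDisk)
      = (Measure.map Complex.measurableEquivRealProd.symm volume).restrict unitDisk by
        rw [hmap],
    Measure.restrict_map Complex.measurableEquivRealProd.symm.measurable
      isOpen_unitDisk.measurableSet,
    lintegral_map hmeas Complex.measurableEquivRealProd.symm.measurable]
  have hpre : Complex.measurableEquivRealProd.symm ⁻¹' unitDisk
      = {q : ℝ × ℝ | q.1^2 + q.2^2 < 1} := by
    ext q
    simp only [Set.mem_preimage, Complex.measurableEquivRealProd_symm_apply, unitDisk, mem_setOf_eq,
      Complex.norm_def, Real.sqrt_lt' one_pos, Complex.normSq_mk, one_pow]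
    constructor <;> intro h <;> nlinarith
  have habs : ∀ q : ℝ × ℝ,
      ‖Complex.measurableEquivRealProd.symm q‖ ^ 2 = q.1^2 + q.2^2 := by
    intro q
    rw [Complex.sq_norm, Complex.measurableEquivRealProd_symm_apply, Complex.normSq_mk]
    ring
  rw [hpre]
  simp only [habs]
  have hc : (0:ℝ) ≤ (α + 1) / Real.pi := div_nonneg (by linarith) Real.pi_pos.le
  calc ∫⁻ q in {q : ℝ × ℝ | q.1^2 + q.2^2 < 1},
        ENNReal.ofReal ((α + 1) / Real.pi * (1 - (q.1^2 + q.2^2)) ^ α)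
      = ∫⁻ q in {q : ℝ × ℝ | q.1^2 + q.2^2 < 1},
        ENNReal.ofReal ((α + 1) / Real.pi) * ENNReal.ofReal ((1 - (q.1^2 + q.2^2)) ^ α) := by
        apply lintegral_congr fun q => ?_
        rw [ENNReal.ofReal_mul hc]
    _ = ENNReal.ofReal ((α + 1) / Real.pi) *
        ∫⁻ q in {q : ℝ × ℝ | q.1^2 + q.2^2 < 1},
          ENNReal.ofReal ((1 - (q.1^2 + q.2^2)) ^ α) := by
        rw [lintegral_const_mul' _ _ ENNReal.ofReal_ne_top]
    _ < ⊤ := ENNReal.mul_lt_top ENNReal.ofReal_lt_top (lintegral_disk_lt_top α hα)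

lemma abs_ae_lt_one (α : ℝ) : ∀ᵐ z ∂(muAlpha α), ‖z‖ < 1 := by
  rw [ae_iff]
  have : {z : ℂ | ¬ ‖z‖ < 1} = unitDiskᶜ := rfl
  rw [this, muAlpha, withDensity_apply _ isOpen_unitDisk.measurableSet.compl,
    Measure.restrict_restrict isOpen_unitDisk.measurableSet.compl]
  simp

lemma memLp_id (α : ℝ) (hα : -1 < α) : MemLp (fun z : ℂ => z) 2 (muAlpha α) := by
  haveI := isFiniteMeasure_muAlpha α hα
  refine MemLp.of_bound continuous_id.aestronglyMeasurable 1 ?_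
  filter_upwards [abs_ae_lt_one α] with z hz
  simpa using hz.le

lemma memLp_conj (α : ℝ) (hα : -1 < α) :
    MemLp (fun z : ℂ => (starRingEnd ℂ) z) 2 (muAlpha α) := by
  haveI := isFiniteMeasure_muAlpha α hα
  refine MemLp.of_bound Complex.continuous_conj.aestronglyMeasurable 1 ?_
  filter_upwards [abs_ae_lt_one α] with z hz
  simpa using hz.le

lemma polyAnalyticOn_id (n : ℕ) (hn : 1 ≤ n) : PolyAnalyticOn n (fun z : ℂ => z) unitDisk := by
  refine ⟨fun k z => if k = 0 then z else 0, ?_, ?_⟩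
  · intro k _
    by_cases h : k = 0
    · simp only [h, if_true]; exact differentiableOn_id
    · simpa [h] using differentiableOn_const (0:ℂ)
  · intro z _
    rw [Finset.sum_eq_single_of_mem 0 (Finset.mem_range.mpr (by omega))]
    · simp
    · intro k _ hk
      simp [hk]

lemma polyAnalyticOn_conj (n : ℕ) (hn : 2 ≤ n) :
    PolyAnalyticOn n (fun z : ℂ => (starRingEnd ℂ) z) unitDisk := by
  refine ⟨fun k _ => if k = 1 then 1 else 0, ?_, ?_⟩
  · intro k _
    by_cases h : k = 1 <;> simp [h, differentiableOn_const]
  · intro z _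
    rw [Finset.sum_eq_single_of_mem 1 (Finset.mem_range.mpr (by omega))]
    · simp
    · intro k _ hk
      simp [hk]


end Aux

/-- The Berezin transform on the n-analytic weighted Bergman space of the unit disk
(n ≥ 2) is not injective: there is a nonzero bounded operator whose Berezin
transform vanishes identically. -/
theorem berezin_not_injective (α : ℝ) (hα : -1 < α) (n : ℕ) (hn : 2 ≤ n)
    (K : ℂ → bergmanSubmodule α n)
    (hK : ∀ z ∈ unitDisk, ∀ f : ℂ → ℂ, PolyAnalyticOn n f unitDisk →
      ∀ hm : MemLp f 2 (muAlpha α),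
        f z = ⟪((K z : bergmanSubmodule α n) : Lp ℂ 2 (muAlpha α)), hm.toLp f⟫_ℂ) :
    ∃ S : bergmanSubmodule α n →L[ℂ] bergmanSubmodule α n, S ≠ 0 ∧
      ∀ z ∈ unitDisk,
        ⟪((K z : bergmanSubmodule α n) : Lp ℂ 2 (muAlpha α)),
          ((S (K z) : bergmanSubmodule α n) : Lp ℂ 2 (muAlpha α))⟫_ℂ = 0 := by
  have hmu := memLp_id α hα
  have hmv := memLp_conj α hα
  have hpu := polyAnalyticOn_id n (by omega)
  have hpv := polyAnalyticOn_conj n hn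
  set u : Lp ℂ 2 (muAlpha α) := hmu.toLp _ with hu_def
  set v : Lp ℂ 2 (muAlpha α) := hmv.toLp _ with hv_def
  have hu_mem : u ∈ bergmanSubmodule α n :=
    Submodule.le_topologicalClosure _ (Submodule.subset_span ⟨_, hpu, hmu, rfl⟩)
  have hv_mem : v ∈ bergmanSubmodule α n :=
    Submodule.le_topologicalClosure _ (Submodule.subset_span ⟨_, hpv, hmv, rfl⟩)
  set U : bergmanSubmodule α n := ⟨u, hu_mem⟩ with hU_def
  set V : bergmanSubmodule α n := ⟨v, hv_mem⟩ with hV_def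
  set S : bergmanSubmodule α n →L[ℂ] bergmanSubmodule α n :=
    (innerSL ℂ U).smulRight U - (innerSL ℂ V).smulRight V with hS_def
  -- key computation
  have key : ∀ (h : bergmanSubmodule α n), ∀ z ∈ unitDisk,
      ⟪((K z : bergmanSubmodule α n) : Lp ℂ 2 (muAlpha α)),
        ((S h : bergmanSubmodule α n) : Lp ℂ 2 (muAlpha α))⟫_ℂ
      = ⟪u, (h : Lp ℂ 2 (muAlpha α))⟫_ℂ * z
        - ⟪v, (h : Lp ℂ 2 (muAlpha α))⟫_ℂ * (starRingEnd ℂ z) := by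
    intro h z hz
    have hSh : ((S h : bergmanSubmodule α n) : Lp ℂ 2 (muAlpha α))
        = ⟪u, (h : Lp ℂ 2 (muAlpha α))⟫_ℂ • u - ⟪v, (h : Lp ℂ 2 (muAlpha α))⟫_ℂ • v := by
      simp only [hS_def, ContinuousLinearMap.sub_apply, ContinuousLinearMap.smulRight_apply,
        innerSL_apply_apply, Submodule.coe_sub, Submodule.coe_smul, Submodule.coe_inner, hU_def, hV_def]
    rw [hSh, inner_sub_right, inner_smul_right, inner_smul_right]
    have h1 : z = ⟪((K z : bergmanSubmodule α n) : Lp ℂ 2 (muAlpha α)), u⟫_ℂ :=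
      hK z hz _ hpu hmu
    have h2 : (starRingEnd ℂ) z = ⟪((K z : bergmanSubmodule α n) : Lp ℂ 2 (muAlpha α)), v⟫_ℂ :=
      hK z hz _ hpv hmv
    rw [← h1, ← h2]
  have hd2 : Complex.I / 2 ∈ unitDisk := by
    simp [unitDisk, norm_div, Complex.norm_I, Complex.norm_two]
    norm_num
  have hd1 : (1 : ℂ) / 2 ∈ unitDisk := by
    simp only [unitDisk, Set.mem_setOf_eq, norm_div, norm_one, Complex.norm_two]
    norm_num
  refine ⟨S, ?_, ?_⟩
  · intro hS0
    have h1 : (Complex.I / 2) = ⟪((K (Complex.I/2) : bergmanSubmodule α n) : Lp ℂ 2 (muAlpha α)), u⟫_ℂ :=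
      hK _ hd2 _ hpu hmu
    have h2 : (starRingEnd ℂ) (Complex.I / 2)
        = ⟪((K (Complex.I/2) : bergmanSubmodule α n) : Lp ℂ 2 (muAlpha α)), v⟫_ℂ :=
      hK _ hd2 _ hpv hmv
    have := key (K (Complex.I/2)) ((1:ℂ)/2) hd1
    rw [hS0] at this
    simp only [ContinuousLinearMap.zero_apply] at this
    rw [← inner_conj_symm u ((K (Complex.I/2) : bergmanSubmodule α n) : Lp ℂ 2 (muAlpha α)),
      ← h1, ← inner_conj_symm v ((K (Complex.I/2) : bergmanSubmodule α n) : Lp ℂ 2 (muAlpha α)),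
      ← h2] at this
    simp only [ZeroMemClass.coe_zero, inner_zero_right] at this
    simp [Complex.ext_iff, Complex.div_re, Complex.div_im] at this
    norm_num at this
  · intro z hz
    have := key (K z) z hz
    rw [← inner_conj_symm u ((K z : bergmanSubmodule α n) : Lp ℂ 2 (muAlpha α)),
      ← (hK z hz _ hpu hmu),
      ← inner_conj_symm v ((K z : bergmanSubmodule α n) : Lp ℂ 2 (muAlpha α)),
      ← (hK z hz _ hpv hmv), Complex.conj_conj] at this
    rw [this]
    ring
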